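/- Let (A, B) be a matched pair of Lie algebroids over M with representations ∇. Then the direct sum A ⊕ B with anchor c(X⊕Y) = a(X) + b(Y) and bracket [X₁⊕Y₁, X₂⊕Y₂] = ([X₁,X₂] + ∇_{Y₁}X₂ − ∇_{Y₂}X₁) ⊕ ([Y₁,Y₂] + ∇_{X₁}Y₂ − ∇_{X₂}Y₁) is a Lie algebroid, i.e. the bracket is skew, satisfies the Leibniz rule [s, ft] = (c(s)f)t + f[s,t], and the Jacobi identity. -/
import Mathlib


/-- Algebraic model of a Lie algebroid over a "manifold" given by its commutative
`ℝ`-algebra of functions `R` (a Lie–Rinehart algebra). -/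
structure LieAlgebroid (R : Type*) [CommRing R] [Algebra ℝ R]
    (L : Type*) [LieRing L] [LieAlgebra ℝ L] [Module R L] where
  anchor : L →ₗ[R] Derivation ℝ R R
  anchor_lie : ∀ x y : L, anchor ⁅x, y⁆ = ⁅anchor x, anchor y⁆
  leibniz : ∀ (f : R) (x y : L), ⁅x, f • y⁆ = anchor x f • y + f • ⁅x, y⁆

set_option maxHeartbeats 2000000 in
/-- Let `(A, B)` be a matched pair of Lie algebroids with mutual
representations `∇`.  Then `A ⊕ B` with anchor `c(X⊕Y) = a X + b Y` and bracket
`[X₁⊕Y₁, X₂⊕Y₂] = ([X₁,X₂] + ∇_{Y₁}X₂ − ∇_{Y₂}X₁) ⊕ ([Y₁,Y₂] + ∇_{X₁}Y₂ − ∇_{X₂}Y₁)`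
is a Lie algebroid: the bracket is skew, satisfies the Leibniz rule
`[s, f t] = (c(s) f) t + f [s,t]`, and the Jacobi identity. -/
theorem stmt19 (R : Type*) [CommRing R] [Algebra ℝ R]
    (A : Type*) [LieRing A] [LieAlgebra ℝ A] [Module R A]
    (B : Type*) [LieRing B] [LieAlgebra ℝ B] [Module R B]
    (LA : LieAlgebroid R A) (LB : LieAlgebroid R B)
    (nAB : A → B → B) (nBA : B → A → A)
    (hAB_add₁ : ∀ (X X' : A) (Y : B), nAB (X + X') Y = nAB X Y + nAB X' Y)
    (hAB_add₂ : ∀ (X : A) (Y Y' : B), nAB X (Y + Y') = nAB X Y + nAB X Y')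
    (hAB_smul₁ : ∀ (f : R) (X : A) (Y : B), nAB (f • X) Y = f • nAB X Y)
    (hAB_smul₂ : ∀ (f : R) (X : A) (Y : B),
      nAB X (f • Y) = LA.anchor X f • Y + f • nAB X Y)
    (hAB_flat : ∀ (X X' : A) (Y : B),
      nAB X (nAB X' Y) - nAB X' (nAB X Y) = nAB ⁅X, X'⁆ Y)
    (hBA_add₁ : ∀ (Y Y' : B) (X : A), nBA (Y + Y') X = nBA Y X + nBA Y' X)
    (hBA_add₂ : ∀ (Y : B) (X X' : A), nBA Y (X + X') = nBA Y X + nBA Y X')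
    (hBA_smul₁ : ∀ (f : R) (Y : B) (X : A), nBA (f • Y) X = f • nBA Y X)
    (hBA_smul₂ : ∀ (f : R) (Y : B) (X : A),
      nBA Y (f • X) = LB.anchor Y f • X + f • nBA Y X)
    (hBA_flat : ∀ (Y Y' : B) (X : A),
      nBA Y (nBA Y' X) - nBA Y' (nBA Y X) = nBA ⁅Y, Y'⁆ X)
    (hmp1 : ∀ (X : A) (Y : B),
      ⁅LA.anchor X, LB.anchor Y⁆ = -LA.anchor (nBA Y X) + LB.anchor (nAB X Y))
    (hmp2 : ∀ (X : A) (Y₁ Y₂ : B),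
      nAB X ⁅Y₁, Y₂⁆ = ⁅nAB X Y₁, Y₂⁆ + ⁅Y₁, nAB X Y₂⁆ +
        nAB (nBA Y₂ X) Y₁ - nAB (nBA Y₁ X) Y₂)
    (hmp3 : ∀ (Y : B) (X₁ X₂ : A),
      nBA Y ⁅X₁, X₂⁆ = ⁅nBA Y X₁, X₂⁆ + ⁅X₁, nBA Y X₂⁆ +
        nBA (nAB X₂ Y) X₁ - nBA (nAB X₁ Y) X₂) :
    let br := fun (s t : A × B) =>
      ((⁅s.1, t.1⁆ + nBA s.2 t.1 - nBA t.2 s.1,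
        ⁅s.2, t.2⁆ + nAB s.1 t.2 - nAB t.1 s.2) : A × B)
    let c := fun (s : A × B) => (LA.anchor s.1 + LB.anchor s.2 : Derivation ℝ R R)
    (∀ s t : A × B, br s t = -br t s) ∧
    (∀ (f : R) (s t : A × B), br s (f • t) = c s f • t + f • br s t) ∧
    (∀ s t u : A × B, br s (br t u) = br (br s t) u + br t (br s u)) := by
  intro br c
  have hBAs2 : ∀ (Y : B) (X X' : A), nBA Y (X - X') = nBA Y X - nBA Y X' := by
    intro Y X X'
    have h := hBA_add₂ Y (X - X') X'
    rw [sub_add_cancel] at h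
    rw [eq_sub_iff_add_eq, ← h]
  have hBAs1 : ∀ (Y Y' : B) (X : A), nBA (Y - Y') X = nBA Y X - nBA Y' X := by
    intro Y Y' X
    have h := hBA_add₁ (Y - Y') Y' X
    rw [sub_add_cancel] at h
    rw [eq_sub_iff_add_eq, ← h]
  have hABs2 : ∀ (X : A) (Y Y' : B), nAB X (Y - Y') = nAB X Y - nAB X Y' := by
    intro X Y Y'
    have h := hAB_add₂ X (Y - Y') Y'
    rw [sub_add_cancel] at h
    rw [eq_sub_iff_add_eq, ← h]
  have hABs1 : ∀ (X X' : A) (Y : B), nAB (X - X') Y = nAB X Y - nAB X' Y := by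
    intro X X' Y
    have h := hAB_add₁ (X - X') X' Y
    rw [sub_add_cancel] at h
    rw [eq_sub_iff_add_eq, ← h]
  have hflatA : ∀ (Y Y' : B) (X : A),
      nBA ⁅Y, Y'⁆ X = nBA Y (nBA Y' X) - nBA Y' (nBA Y X) :=
    fun Y Y' X => (hBA_flat Y Y' X).symm
  have hflatB : ∀ (X X' : A) (Y : B),
      nAB ⁅X, X'⁆ Y = nAB X (nAB X' Y) - nAB X' (nAB X Y) :=
    fun X X' Y => (hAB_flat X X' Y).symm
  refine ⟨?_, ?_, ?_⟩
  · intro s t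
    simp only [br, Prod.neg_mk, Prod.mk.injEq]
    constructor
    · rw [← lie_skew s.1 t.1]; abel
    · rw [← lie_skew s.2 t.2]; abel
  · intro f s t
    apply Prod.ext <;>
      simp only [br, c, Prod.smul_fst, Prod.smul_snd, Prod.fst_add, Prod.snd_add,
        LA.leibniz, LB.leibniz, hAB_smul₁, hAB_smul₂, hBA_smul₁,
        hBA_smul₂, lie_smul, Derivation.add_apply, add_smul, smul_add, smul_sub] <;>
      abel
  · intro s t u
    simp only [br, Prod.mk.injEq, Prod.mk_add_mk]
    constructor
    · simp only [lie_add, add_lie, lie_sub, sub_lie, hBA_add₁, hBA_add₂,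
        hBAs1, hBAs2, hmp3, hflatA, lie_lie]
      rw [← lie_skew t.1 (nBA u.2 s.1)]
      abel
    · simp only [lie_add, add_lie, lie_sub, sub_lie, hAB_add₁, hAB_add₂,
        hABs1, hABs2, hmp2, hflatB, lie_lie]
      rw [← lie_skew t.2 (nAB u.1 s.2)]
      abel
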